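/- arXiv:1811.01587 — 7 statements merged into one kernel-verified Lean document; each statement's English description precedes it below -/
import Mathlib

section
/- Let E and F be real inner product spaces, f : E → ℝ, g : F → ℝ, H : E × F → ℝ, and define Ψ(x, y) = f(x) + g(y) + H(x, y). Fix η₁, η₂ > 0 and C_x, C_y ≥ 0. Let x^{t−1}, x^t, x^{t+1} ∈ E, y^{t−1}, y^t, y^{t+1} ∈ F and error vectors e_x ∈ E, e_y ∈ F satisfy ‖e_x‖ ≤ C_x‖x^t − x^{t−1}‖ and ‖e_y‖ ≤ C_y‖y^t − y^{t−1}‖. Assume the two task-embedded comparison inequalities: f(x^{t+1}) + H(x^{t+1}, y^t) + (η₁/2)‖x^{t+1} − x^t‖² − ⟨e_x, x^{t+1}⟩ ≤ f(x^t) + H(x^t, y^t) − ⟨e_x, x^t⟩, and g(y^{t+1}) + H(x^{t+1}, y^{t+1}) + (η₂/2)‖y^{t+1} − y^t‖² − ⟨e_y, y^{t+1}⟩ ≤ g(y^t) + H(x^{t+1}, y^t) − ⟨e_y, y^t⟩. Define Φ(x, y, p, q) = Ψ(x, y) + (C_x²/η₁)‖x − p‖² + (C_y²/η₂)‖y − q‖².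 Then Φ(x^t, y^t, x^{t−1}, y^{t−1}) − Φ(x^{t+1}, y^{t+1}, x^t, y^t) ≥ (η₁/4 − C_x²/η₁)‖x^{t+1} − x^t‖² + (η₂/4 − C_y²/η₂)‖y^{t+1} − y^t‖². -/
open scoped RealInnerProductSpace

/-- Sufficient-descent inequality (Proposition 2, TECU case "3-6"):
both blocks updated by task-embedded inexact proximal steps. -/
theorem tecu_descent_case_3_6
    {E F : Type*} [NormedAddCommGroup E] [InnerProductSpace ℝ E]
    [NormedAddCommGroup F] [InnerProductSpace ℝ F]
    (f : E → ℝ) (g : F → ℝ) (H : E × F → ℝ)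
    (Ψ : E → F → ℝ) (hΨ : ∀ x y, Ψ x y = f x + g y + H (x, y))
    (η₁ η₂ Cx Cy : ℝ) (hη₁ : 0 < η₁) (hη₂ : 0 < η₂) (hCx : 0 ≤ Cx) (hCy : 0 ≤ Cy)
    (xm x xp : E) (ym y yp : F) (ex : E) (ey : F)
    (hex : ‖ex‖ ≤ Cx * ‖x - xm‖) (hey : ‖ey‖ ≤ Cy * ‖y - ym‖)
    (hcompx : f xp + H (xp, y) + (η₁ / 2) * ‖xp - x‖ ^ 2 - ⟪ex, xp⟫
        ≤ f x + H (x, y) - ⟪ex, x⟫)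
    (hcompy : g yp + H (xp, yp) + (η₂ / 2) * ‖yp - y‖ ^ 2 - ⟪ey, yp⟫
        ≤ g y + H (xp, y) - ⟪ey, y⟫)
    (Φ : E → F → E → F → ℝ)
    (hΦ : ∀ x' y' p q, Φ x' y' p q
        = Ψ x' y' + (Cx ^ 2 / η₁) * ‖x' - p‖ ^ 2 + (Cy ^ 2 / η₂) * ‖y' - q‖ ^ 2) :
    Φ x y xm ym - Φ xp yp x y
      ≥ (η₁ / 4 - Cx ^ 2 / η₁) * ‖xp - x‖ ^ 2 + (η₂ / 4 - Cy ^ 2 / η₂) * ‖yp - y‖ ^ 2 := by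

  have key : ∀ (a b c : ℝ), 0 < c → a * b ≤ a ^ 2 / c + c / 4 * b ^ 2 := by
    intro a b c hc
    rw [show a ^ 2 / c + c / 4 * b ^ 2 = (4 * a ^ 2 + c ^ 2 * b ^ 2) / (4 * c) by
      field_simp, le_div_iff₀ (by positivity)]
    nlinarith [sq_nonneg (2 * a - c * b)]
  have hx1 : ⟪ex, xp⟫ - ⟪ex, x⟫ ≤ Cx * ‖x - xm‖ * ‖xp - x‖ := by
    have := real_inner_le_norm ex (xp - x)
    rw [inner_sub_right] at this
    have h2 : ‖ex‖ * ‖xp - x‖ ≤ Cx * ‖x - xm‖ * ‖xp - x‖ :=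
      mul_le_mul_of_nonneg_right hex (norm_nonneg _)
    linarith
  have hy1 : ⟪ey, yp⟫ - ⟪ey, y⟫ ≤ Cy * ‖y - ym‖ * ‖yp - y‖ := by
    have := real_inner_le_norm ey (yp - y)
    rw [inner_sub_right] at this
    have h2 : ‖ey‖ * ‖yp - y‖ ≤ Cy * ‖y - ym‖ * ‖yp - y‖ :=
      mul_le_mul_of_nonneg_right hey (norm_nonneg _)
    linarith
  have hx2 : Cx * ‖x - xm‖ * ‖xp - x‖
      ≤ Cx ^ 2 / η₁ * ‖x - xm‖ ^ 2 + η₁ / 4 * ‖xp - x‖ ^ 2 := by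
    exact key (Cx * ‖x - xm‖) _ _ hη₁ |>.trans_eq (by rw [mul_pow]; ring)
  have hy2 : Cy * ‖y - ym‖ * ‖yp - y‖
      ≤ Cy ^ 2 / η₂ * ‖y - ym‖ ^ 2 + η₂ / 4 * ‖yp - y‖ ^ 2 := by
    exact key (Cy * ‖y - ym‖) _ _ hη₂ |>.trans_eq (by rw [mul_pow]; ring)
  rw [hΦ, hΦ, hΨ, hΨ]
  linarith
end

section
/- Let E and F be real inner product spaces, f : E → ℝ, g : F → ℝ, H : E × F → ℝ, and define Ψ(x, y) = f(x) + g(y) + H(x, y). Fix ζ > 0, η₂ > 0 and C_y ≥ 0. Let x^t, x^{t+1} ∈ E, y^{t−1}, y^t, y^{t+1} ∈ F and an error vector e_y ∈ F satisfy ‖e_y‖ ≤ C_y‖y^t − y^{t−1}‖. Assume the proximal comparison inequality f(x^{t+1}) + H(x^{t+1}, y^t) + (ζ/2)‖x^{t+1} − x^t‖² ≤ f(x^t) + H(x^t, y^t) and the task-embedded comparison inequality g(y^{t+1}) + H(x^{t+1}, y^{t+1}) + (η₂/2)‖y^{t+1} − y^t‖² − ⟨e_y, y^{t+1}⟩ ≤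 g(y^t) + H(x^{t+1}, y^t) − ⟨e_y, y^t⟩. Define Φ(x, y, q) = Ψ(x, y) + (C_y²/η₂)‖y − q‖². Then Φ(x^t, y^t, y^{t−1}) − Φ(x^{t+1}, y^{t+1}, y^t) ≥ (ζ/2)‖x^{t+1} − x^t‖² + (η₂/4 − C_y²/η₂)‖y^{t+1} − y^t‖². -/
open scoped RealInnerProductSpace

/-- Sufficient-descent inequality (Proposition 2, TECU case "1-6"):
x-block updated by an exact proximal step, y-block by a task-embedded inexact step. -/
theorem tecu_descent_case_1_6
    {E F : Type*} [NormedAddCommGroup E] [InnerProductSpace ℝ E]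
    [NormedAddCommGroup F] [InnerProductSpace ℝ F]
    (f : E → ℝ) (g : F → ℝ) (H : E × F → ℝ)
    (Ψ : E → F → ℝ) (hΨ : ∀ x y, Ψ x y = f x + g y + H (x, y))
    (ζ η₂ Cy : ℝ) (hζ : 0 < ζ) (hη₂ : 0 < η₂) (hCy : 0 ≤ Cy)
    (x xp : E) (ym y yp : F) (ey : F)
    (hey : ‖ey‖ ≤ Cy * ‖y - ym‖)
    (hcompx : f xp + H (xp, y) + (ζ / 2) * ‖xp - x‖ ^ 2 ≤ f x + H (x, y))
    (hcompy : g yp + H (xp, yp) + (η₂ / 2) * ‖yp - y‖ ^ 2 - ⟪ey, yp⟫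
        ≤ g y + H (xp, y) - ⟪ey, y⟫)
    (Φ : E → F → F → ℝ)
    (hΦ : ∀ x' y' q, Φ x' y' q = Ψ x' y' + (Cy ^ 2 / η₂) * ‖y' - q‖ ^ 2) :
    Φ x y ym - Φ xp yp y
      ≥ (ζ / 2) * ‖xp - x‖ ^ 2 + (η₂ / 4 - Cy ^ 2 / η₂) * ‖yp - y‖ ^ 2 := by
  have h1 : ⟪ey, yp⟫ - ⟪ey, y⟫ ≤ ‖ey‖ * ‖yp - y‖ := by
    have := real_inner_le_norm ey (yp - y)
    rwa [inner_sub_right] at this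
  have h2 : ‖ey‖ * ‖yp - y‖ ≤ Cy * ‖y - ym‖ * ‖yp - y‖ :=
    mul_le_mul_of_nonneg_right hey (norm_nonneg _)
  have h3 : Cy * ‖y - ym‖ * ‖yp - y‖
      ≤ Cy ^ 2 / η₂ * ‖y - ym‖ ^ 2 + η₂ / 4 * ‖yp - y‖ ^ 2 := by
    have key : 0 ≤ (2 * (Cy * ‖y - ym‖) - η₂ * ‖yp - y‖) ^ 2 := sq_nonneg _
    have h4 : Cy ^ 2 / η₂ = Cy ^ 2 * (1 / η₂) := by ring
    rw [h4]
    nlinarith [key, mul_pos hη₂ hη₂, sq_nonneg (Cy * ‖y - ym‖), hη₂.le,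
      mul_one_div_cancel hη₂.ne']
  rw [hΦ, hΦ, hΨ, hΨ]
  have hd : Cy ^ 2 / η₂ * ‖y - ym‖ ^ 2 = Cy ^ 2 / η₂ * ‖y - ym‖ ^ 2 := rfl
  linarith
end

section
/- Let E be a real normed vector space and Ψ : E → ℝ a function that is bounded below and coercive, meaning Ψ(z) → +∞ as ‖z‖ → +∞ (i.e., Ψ tends to atTop along the filter comap ‖·‖ atTop). Let c > 0. Then the function Φ : E × E → ℝ defined by Φ(z, w) = Ψ(z) + c‖z − w‖² is coercive on the product space: Φ(z, w) → +∞ as ‖(z, w)‖ → +∞. -/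
open Filter

/-- Coercivity transfer: the Lyapunov function `Φ (z, w) = Ψ z + c * ‖z - w‖ ^ 2`
built from a bounded-below coercive `Ψ` is coercive on the product space. -/
theorem lyapunov_coercive
    {E : Type*} [NormedAddCommGroup E] [NormedSpace ℝ E]
    (Ψ : E → ℝ) (m : ℝ) (hm : ∀ z, m ≤ Ψ z)
    (hcoercive : Tendsto Ψ (comap norm atTop) atTop)
    (c : ℝ) (hc : 0 < c) :
    Tendsto (fun zw : E × E => Ψ zw.1 + c * ‖zw.1 - zw.2‖ ^ 2)
      (comap norm atTop) atTop := by
  rw [tendsto_atTop]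
  intro M
  -- get R₁ from coercivity of Ψ
  have h1 := tendsto_atTop.1 hcoercive M
  rw [eventually_comap, eventually_atTop] at h1
  obtain ⟨R₁, hR₁⟩ := h1
  set r : ℝ := Real.sqrt ((M - m) / c) with hr
  have hrnn : 0 ≤ r := Real.sqrt_nonneg _
  have hquad : ∀ x : E, r ≤ ‖x‖ → M ≤ m + c * ‖x‖ ^ 2 := by
    intro x hx
    have h2 : (M - m) / c ≤ ‖x‖ ^ 2 := by
      rcases le_or_gt ((M - m) / c) 0 with h | h
      · exact h.trans (sq_nonneg _)
      · calc (M - m) / c = r ^ 2 := (Real.sq_sqrt h.le).symm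
          _ ≤ ‖x‖ ^ 2 := pow_le_pow_left₀ hrnn hx 2
    have h3 := (div_le_iff₀ hc).1 h2
    linarith
  set R : ℝ := max R₁ 0 + r with hR
  rw [eventually_comap, eventually_atTop]
  refine ⟨R, fun b hb zw hzw => ?_⟩
  obtain ⟨z, w⟩ := zw
  have hzwnorm : ‖(z, w)‖ = max ‖z‖ ‖w‖ := rfl
  by_cases hz : R₁ ≤ ‖z‖
  · have := hR₁ ‖z‖ hz z rfl
    nlinarith [norm_nonneg (z - w), sq_nonneg ‖z - w‖]
  · push_neg at hz
    have hw : R ≤ ‖w‖ := by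
      have hmax : R ≤ max ‖z‖ ‖w‖ := by
        rw [← hzwnorm, hzw]; exact hb
      rcases le_max_iff.1 hmax with h | h
      · exfalso; have : R₁ ≤ ‖z‖ := le_trans (le_trans (le_max_left _ _) (by linarith)) (le_refl _)
        linarith
      · exact h
    have hsub : r ≤ ‖z - w‖ := by
      have := norm_sub_norm_le w z
      have h3 : ‖w‖ - ‖z‖ ≤ ‖z - w‖ := by
        rw [norm_sub_rev]; exact (abs_le.1 (abs_norm_sub_norm_le w z)).2.trans_eq rfl |>.trans (le_refl _) |>.trans (le_refl _)
      have hz0 : ‖z‖ ≤ max R₁ 0 := le_max_of_le_left hz.le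
      linarith
    have := hquad (z - w) hsub
    have := hm z
    linarith
end

section
/- Let E and F be real inner product spaces and let G_x : E × F → E satisfy the Lipschitz bound ‖G_x(x, y) − G_x(x, y')‖ ≤ M‖y − y'‖ for all x ∈ E, y, y' ∈ F, where M ≥ 0. Fix constants η₁, η₂ > 0 and C_x, C_y ≥ 0. Let x^{t−2}, x^{t−1}, x^t ∈ E, y^{t−2}, y^{t−1}, y^t ∈ F and error vectors e_x ∈ E, e_y ∈ F satisfy ‖e_x‖ ≤ C_x‖x^{t−1} − x^{t−2}‖ and ‖e_y‖ ≤ C_y‖y^{t−1} − y^{t−2}‖. For s ∈ {t−1, t}, write D_s = (‖x^s − x^{s−1}‖² + ‖y^s − y^{s−1}‖²)^{1/2}. Then, with b = max{M + η₁ + η₂ + 4C_x²/η₁ + 4C_y²/η₂, C_x + C_y}, the following bound holds: ‖G_x(x^t, y^t) − G_x(x^t, y^{t−1}) + η₁(x^{t−1} − x^t) + e_x + (2C_x²/η₁)(x^t − x^{t−1})‖ + ‖e_y + η₂(y^{t−1} − y^t) + (2C_y²/η₂)(y^t − y^{t−1})‖ + ‖(2C_x²/η₁)(x^{t−1} − x^t)‖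 + ‖(2C_y²/η₂)(y^{t−1} − y^t)‖ ≤ b(D_t + D_{t−1}). -/
set_option maxHeartbeats 1000000 in
/-- Bounded-subgradient estimate (Eq. (7b)) for the TECU case "3-6". -/
theorem tecu_bounded_subgradient_case_3_6
    {E F : Type*} [NormedAddCommGroup E] [InnerProductSpace ℝ E]
    [NormedAddCommGroup F] [InnerProductSpace ℝ F]
    (Gx : E × F → E) (M : ℝ) (hM : 0 ≤ M)
    (hLip : ∀ (x : E) (y y' : F), ‖Gx (x, y) - Gx (x, y')‖ ≤ M * ‖y - y'‖)
    (η₁ η₂ Cx Cy : ℝ) (hη₁ : 0 < η₁) (hη₂ : 0 < η₂) (hCx : 0 ≤ Cx) (hCy : 0 ≤ Cy)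
    (xmm xm x : E) (ymm ym y : F) (ex : E) (ey : F)
    (hex : ‖ex‖ ≤ Cx * ‖xm - xmm‖) (hey : ‖ey‖ ≤ Cy * ‖ym - ymm‖) :
    ‖Gx (x, y) - Gx (x, ym) + η₁ • (xm - x) + ex + (2 * Cx ^ 2 / η₁) • (x - xm)‖
      + ‖ey + η₂ • (ym - y) + (2 * Cy ^ 2 / η₂) • (y - ym)‖
      + ‖(2 * Cx ^ 2 / η₁) • (xm - x)‖
      + ‖(2 * Cy ^ 2 / η₂) • (ym - y)‖
      ≤ max (M + η₁ + η₂ + 4 * Cx ^ 2 / η₁ + 4 * Cy ^ 2 / η₂) (Cx + Cy)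
        * ((‖x - xm‖ ^ 2 + ‖y - ym‖ ^ 2) ^ ((1 : ℝ) / 2)
          + (‖xm - xmm‖ ^ 2 + ‖ym - ymm‖ ^ 2) ^ ((1 : ℝ) / 2)) := by
  set a1 := ‖x - xm‖ with ha1def
  set a2 := ‖y - ym‖ with ha2def
  set b1 := ‖xm - xmm‖ with hb1def
  set b2 := ‖ym - ymm‖ with hb2def
  set c1 := 2 * Cx ^ 2 / η₁ with hc1def
  set c2 := 2 * Cy ^ 2 / η₂ with hc2def
  have hc1 : 0 ≤ c1 := by positivity
  have hc2 : 0 ≤ c2 := by positivity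
  have ha1 : 0 ≤ a1 := norm_nonneg _
  have ha2 : 0 ≤ a2 := norm_nonneg _
  have hb1 : 0 ≤ b1 := norm_nonneg _
  have hb2 : 0 ≤ b2 := norm_nonneg _
  have hDt : (a1 ^ 2 + a2 ^ 2) ^ ((1:ℝ)/2) = Real.sqrt (a1 ^ 2 + a2 ^ 2) := by
    rw [Real.sqrt_eq_rpow]
  have hDm : (b1 ^ 2 + b2 ^ 2) ^ ((1:ℝ)/2) = Real.sqrt (b1 ^ 2 + b2 ^ 2) := by
    rw [Real.sqrt_eq_rpow]
  rw [hDt, hDm]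
  set Dt := Real.sqrt (a1 ^ 2 + a2 ^ 2) with hDtdef
  set Dm := Real.sqrt (b1 ^ 2 + b2 ^ 2) with hDmdef
  have hDt0 : 0 ≤ Dt := Real.sqrt_nonneg _
  have hDm0 : 0 ≤ Dm := Real.sqrt_nonneg _
  have ha1Dt : a1 ≤ Dt := by
    rw [hDtdef]
    calc a1 = Real.sqrt (a1 ^ 2) := (Real.sqrt_sq ha1).symm
      _ ≤ _ := Real.sqrt_le_sqrt (by nlinarith)
  have ha2Dt : a2 ≤ Dt := by
    rw [hDtdef]
    calc a2 = Real.sqrt (a2 ^ 2) := (Real.sqrt_sq ha2).symm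
      _ ≤ _ := Real.sqrt_le_sqrt (by nlinarith)
  have hb1Dm : b1 ≤ Dm := by
    rw [hDmdef]
    calc b1 = Real.sqrt (b1 ^ 2) := (Real.sqrt_sq hb1).symm
      _ ≤ _ := Real.sqrt_le_sqrt (by nlinarith)
  have hb2Dm : b2 ≤ Dm := by
    rw [hDmdef]
    calc b2 = Real.sqrt (b2 ^ 2) := (Real.sqrt_sq hb2).symm
      _ ≤ _ := Real.sqrt_le_sqrt (by nlinarith)
  have hsm : ‖xm - x‖ = a1 := by rw [norm_sub_rev]
  have hsm2 : ‖ym - y‖ = a2 := by rw [norm_sub_rev]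
  have hT1 : ‖Gx (x, y) - Gx (x, ym) + η₁ • (xm - x) + ex + c1 • (x - xm)‖
      ≤ M * a2 + η₁ * a1 + Cx * b1 + c1 * a1 := by
    calc ‖Gx (x, y) - Gx (x, ym) + η₁ • (xm - x) + ex + c1 • (x - xm)‖
        ≤ ‖Gx (x, y) - Gx (x, ym) + η₁ • (xm - x) + ex‖ + ‖c1 • (x - xm)‖ :=
          norm_add_le _ _
      _ ≤ ‖Gx (x, y) - Gx (x, ym) + η₁ • (xm - x)‖ + ‖ex‖ + ‖c1 • (x - xm)‖ := by
          gcongr; exact norm_add_le _ _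
      _ ≤ ‖Gx (x, y) - Gx (x, ym)‖ + ‖η₁ • (xm - x)‖ + ‖ex‖ + ‖c1 • (x - xm)‖ := by
          gcongr; exact norm_add_le _ _
      _ ≤ M * a2 + η₁ * a1 + Cx * b1 + c1 * a1 := by
          rw [norm_smul, norm_smul, Real.norm_eq_abs, Real.norm_eq_abs,
            abs_of_nonneg hη₁.le, abs_of_nonneg hc1, hsm]
          gcongr
          exact hLip x y ym
  have hT2 : ‖ey + η₂ • (ym - y) + c2 • (y - ym)‖ ≤ Cy * b2 + η₂ * a2 + c2 * a2 := by
    calc ‖ey + η₂ • (ym - y) + c2 • (y - ym)‖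
        ≤ ‖ey + η₂ • (ym - y)‖ + ‖c2 • (y - ym)‖ := norm_add_le _ _
      _ ≤ ‖ey‖ + ‖η₂ • (ym - y)‖ + ‖c2 • (y - ym)‖ := by
          gcongr; exact norm_add_le _ _
      _ ≤ Cy * b2 + η₂ * a2 + c2 * a2 := by
          rw [norm_smul, norm_smul, Real.norm_eq_abs, Real.norm_eq_abs,
            abs_of_nonneg hη₂.le, abs_of_nonneg hc2, hsm2]
          gcongr
  have hT3 : ‖c1 • (xm - x)‖ = c1 * a1 := by
    rw [norm_smul, Real.norm_eq_abs, abs_of_nonneg hc1, hsm]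
  have hT4 : ‖c2 • (ym - y)‖ = c2 * a2 := by
    rw [norm_smul, Real.norm_eq_abs, abs_of_nonneg hc2, hsm2]
  have key : M * a2 + η₁ * a1 + Cx * b1 + c1 * a1 + (Cy * b2 + η₂ * a2 + c2 * a2)
      + c1 * a1 + c2 * a2
      ≤ max (M + η₁ + η₂ + 4 * Cx ^ 2 / η₁ + 4 * Cy ^ 2 / η₂) (Cx + Cy) * (Dt + Dm) := by
    have hK1 : M + η₁ + η₂ + 4 * Cx ^ 2 / η₁ + 4 * Cy ^ 2 / η₂
        ≤ max (M + η₁ + η₂ + 4 * Cx ^ 2 / η₁ + 4 * Cy ^ 2 / η₂) (Cx + Cy) := le_max_left _ _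
    have hK2 : Cx + Cy ≤ max (M + η₁ + η₂ + 4 * Cx ^ 2 / η₁ + 4 * Cy ^ 2 / η₂) (Cx + Cy) :=
      le_max_right _ _
    have hc1' : c1 + c1 = 4 * Cx ^ 2 / η₁ - 2 * Cx ^ 2 / η₁ + c1 := by
      rw [hc1def]; ring
    have step1 : M * a2 + η₁ * a1 + Cx * b1 + c1 * a1 + (Cy * b2 + η₂ * a2 + c2 * a2)
        + c1 * a1 + c2 * a2
        ≤ (M + η₁ + η₂ + 4 * Cx ^ 2 / η₁ + 4 * Cy ^ 2 / η₂) * Dt + (Cx + Cy) * Dm := by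
      have e1 : 4 * Cx ^ 2 / η₁ = c1 + c1 := by rw [hc1def]; ring
      have e2 : 4 * Cy ^ 2 / η₂ = c2 + c2 := by rw [hc2def]; ring
      rw [e1, e2]
      linarith [mul_le_mul_of_nonneg_left ha2Dt hM,
        mul_le_mul_of_nonneg_left ha1Dt hη₁.le,
        mul_le_mul_of_nonneg_left ha2Dt hη₂.le,
        mul_le_mul_of_nonneg_left ha1Dt hc1,
        mul_le_mul_of_nonneg_left ha2Dt hc2,
        mul_le_mul_of_nonneg_left hb1Dm hCx,
        mul_le_mul_of_nonneg_left hb2Dm hCy]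
    calc _ ≤ (M + η₁ + η₂ + 4 * Cx ^ 2 / η₁ + 4 * Cy ^ 2 / η₂) * Dt + (Cx + Cy) * Dm := step1
      _ ≤ max (M + η₁ + η₂ + 4 * Cx ^ 2 / η₁ + 4 * Cy ^ 2 / η₂) (Cx + Cy) * Dt
          + max (M + η₁ + η₂ + 4 * Cx ^ 2 / η₁ + 4 * Cy ^ 2 / η₂) (Cx + Cy) * Dm := by
          gcongr
      _ = _ := by ring
  have hetot : ‖ex‖ ≤ Cx * b1 := hex
  calc _ ≤ (M * a2 + η₁ * a1 + Cx * b1 + c1 * a1) + (Cy * b2 + η₂ * a2 + c2 * a2)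
            + c1 * a1 + c2 * a2 := by
        rw [hT3, hT4]; gcongr
    _ ≤ _ := key
end

section
/- Let E and F be real inner product spaces and let G_x : E × F → E satisfy the Lipschitz bound ‖G_x(x, y) − G_x(x, y')‖ ≤ M‖y − y'‖ for all x ∈ E, y, y' ∈ F, where M ≥ 0. Fix constants ζ > 0, η₂ > 0 and C_y ≥ 0. Let x^{t−1}, x^t ∈ E, y^{t−2}, y^{t−1}, y^t ∈ F and an error vector e_y ∈ F satisfy ‖e_y‖ ≤ C_y‖y^{t−1} − y^{t−2}‖. For s ∈ {t−1, t}, write D_s = (‖x^s − x^{s−1}‖² + ‖y^s − y^{s−1}‖²)^{1/2}, where x^{t−2} may be taken arbitrary since only D_{t−1} ≥ ‖y^{t−1} − y^{t−2}‖ is used. Then, with b = max{ζ + M + η₂ + 4C_y²/η₂, C_y}, the following bound holds: ‖G_x(x^t, y^t) − G_x(x^t, y^{t−1}) + ζ(x^{t−1} − x^t)‖ + ‖e_y + η₂(y^{t−1} − y^t) + (2C_y²/η₂)(y^t − y^{t−1})‖ + ‖(2C_y²/η₂)(y^{t−1} − y^t)‖ ≤ b(D_t + D_{t−1}). -/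
set_option maxHeartbeats 1000000


/-- Bounded-subgradient estimate (Eq. (7b)) for the TECU case "1-6". -/
theorem tecu_bounded_subgradient_case_1_6
    {E F : Type*} [NormedAddCommGroup E] [InnerProductSpace ℝ E]
    [NormedAddCommGroup F] [InnerProductSpace ℝ F]
    (Gx : E × F → E) (M : ℝ) (hM : 0 ≤ M)
    (hLip : ∀ (x : E) (y y' : F), ‖Gx (x, y) - Gx (x, y')‖ ≤ M * ‖y - y'‖)
    (ζ η₂ Cy : ℝ) (hζ : 0 < ζ) (hη₂ : 0 < η₂) (hCy : 0 ≤ Cy)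
    (xmm xm x : E) (ymm ym y : F) (ey : F)
    (hey : ‖ey‖ ≤ Cy * ‖ym - ymm‖) :
    ‖Gx (x, y) - Gx (x, ym) + ζ • (xm - x)‖
      + ‖ey + η₂ • (ym - y) + (2 * Cy ^ 2 / η₂) • (y - ym)‖
      + ‖(2 * Cy ^ 2 / η₂) • (ym - y)‖
      ≤ max (ζ + M + η₂ + 4 * Cy ^ 2 / η₂) Cy
        * ((‖x - xm‖ ^ 2 + ‖y - ym‖ ^ 2) ^ ((1 : ℝ) / 2)
          + (‖xm - xmm‖ ^ 2 + ‖ym - ymm‖ ^ 2) ^ ((1 : ℝ) / 2)) := by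
  set a := ‖x - xm‖ with ha
  set c := ‖y - ym‖ with hc
  set d := ‖ym - ymm‖ with hd
  have ha0 : 0 ≤ a := norm_nonneg _
  have hc0 : 0 ≤ c := norm_nonneg _
  have hd0 : 0 ≤ d := norm_nonneg _
  set S := (a ^ 2 + c ^ 2) ^ ((1 : ℝ) / 2) with hS
  set T := ((‖xm - xmm‖ : ℝ) ^ 2 + d ^ 2) ^ ((1 : ℝ) / 2) with hT
  have hSsqrt : S = Real.sqrt (a ^ 2 + c ^ 2) := by
    rw [hS, Real.sqrt_eq_rpow]
  have hTsqrt : T = Real.sqrt (‖xm - xmm‖ ^ 2 + d ^ 2) := by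
    rw [hT, Real.sqrt_eq_rpow]
  have haS : a ≤ S := by
    rw [hSsqrt]
    nlinarith [Real.sq_sqrt (by positivity : (0:ℝ) ≤ a ^ 2 + c ^ 2),
      Real.sqrt_nonneg (a ^ 2 + c ^ 2), sq_nonneg c,
      sq_nonneg (Real.sqrt (a ^ 2 + c ^ 2) - a)]
  have hcS : c ≤ S := by
    rw [hSsqrt]
    nlinarith [Real.sq_sqrt (by positivity : (0:ℝ) ≤ a ^ 2 + c ^ 2),
      Real.sqrt_nonneg (a ^ 2 + c ^ 2), sq_nonneg a,
      sq_nonneg (Real.sqrt (a ^ 2 + c ^ 2) - c)]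
  have hdT : d ≤ T := by
    rw [hTsqrt]
    nlinarith [Real.sq_sqrt (by positivity : (0:ℝ) ≤ ‖xm - xmm‖ ^ 2 + d ^ 2),
      Real.sqrt_nonneg (‖xm - xmm‖ ^ 2 + d ^ 2), sq_nonneg (‖xm - xmm‖ : ℝ),
      sq_nonneg (Real.sqrt (‖xm - xmm‖ ^ 2 + d ^ 2) - d)]
  have hT0 : 0 ≤ T := by rw [hTsqrt]; exact Real.sqrt_nonneg _
  have hS0 : 0 ≤ S := by rw [hSsqrt]; exact Real.sqrt_nonneg _
  have hk : 0 ≤ 2 * Cy ^ 2 / η₂ := by positivity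
  -- bound term 1
  have h1 : ‖Gx (x, y) - Gx (x, ym) + ζ • (xm - x)‖ ≤ M * c + ζ * a := by
    calc ‖Gx (x, y) - Gx (x, ym) + ζ • (xm - x)‖
        ≤ ‖Gx (x, y) - Gx (x, ym)‖ + ‖ζ • (xm - x)‖ := norm_add_le _ _
      _ ≤ M * c + ζ * a := by
          have := hLip x y ym
          rw [norm_smul, Real.norm_eq_abs, abs_of_pos hζ, ← norm_neg (xm - x)]
          simp only [neg_sub]
          exact add_le_add this le_rfl
  -- bound term 2
  have h2 : ‖ey + η₂ • (ym - y) + (2 * Cy ^ 2 / η₂) • (y - ym)‖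
      ≤ Cy * d + η₂ * c + (2 * Cy ^ 2 / η₂) * c := by
    calc ‖ey + η₂ • (ym - y) + (2 * Cy ^ 2 / η₂) • (y - ym)‖
        ≤ ‖ey + η₂ • (ym - y)‖ + ‖(2 * Cy ^ 2 / η₂) • (y - ym)‖ := norm_add_le _ _
      _ ≤ (‖ey‖ + ‖η₂ • (ym - y)‖) + ‖(2 * Cy ^ 2 / η₂) • (y - ym)‖ :=
          add_le_add (norm_add_le _ _) le_rfl
      _ ≤ Cy * d + η₂ * c + (2 * Cy ^ 2 / η₂) * c := by
          rw [norm_smul, norm_smul, Real.norm_eq_abs, Real.norm_eq_abs,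
            abs_of_pos hη₂, abs_of_nonneg hk, ← norm_neg (ym - y)]
          simp only [neg_sub]
          exact add_le_add (add_le_add hey le_rfl) le_rfl
  -- bound term 3
  have h3 : ‖(2 * Cy ^ 2 / η₂) • (ym - y)‖ ≤ (2 * Cy ^ 2 / η₂) * c := by
    rw [norm_smul, Real.norm_eq_abs, abs_of_nonneg hk, ← norm_neg (ym - y)]
    simp only [neg_sub]
    exact le_rfl
  set b := max (ζ + M + η₂ + 4 * Cy ^ 2 / η₂) Cy with hb
  have hb1 : ζ + M + η₂ + 4 * Cy ^ 2 / η₂ ≤ b := le_max_left _ _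
  have hb2 : Cy ≤ b := le_max_right _ _
  have hmain : ‖Gx (x, y) - Gx (x, ym) + ζ • (xm - x)‖
      + ‖ey + η₂ • (ym - y) + (2 * Cy ^ 2 / η₂) • (y - ym)‖
      + ‖(2 * Cy ^ 2 / η₂) • (ym - y)‖
      ≤ ζ * a + (M + η₂ + 4 * Cy ^ 2 / η₂) * c + Cy * d := by
    have h4 : M * c + ζ * a + (Cy * d + η₂ * c + 2 * Cy ^ 2 / η₂ * c)
        + 2 * Cy ^ 2 / η₂ * c
        = ζ * a + (M + η₂ + 4 * Cy ^ 2 / η₂) * c + Cy * d := by ring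
    linarith [h1, h2, h3]
  calc ‖Gx (x, y) - Gx (x, ym) + ζ • (xm - x)‖
      + ‖ey + η₂ • (ym - y) + (2 * Cy ^ 2 / η₂) • (y - ym)‖
      + ‖(2 * Cy ^ 2 / η₂) • (ym - y)‖
      ≤ ζ * a + (M + η₂ + 4 * Cy ^ 2 / η₂) * c + Cy * d := hmain
    _ ≤ ζ * S + (M + η₂ + 4 * Cy ^ 2 / η₂) * S + Cy * T := by
        gcongr
    _ = (ζ + M + η₂ + 4 * Cy ^ 2 / η₂) * S + Cy * T := by ring
    _ ≤ b * S + b * T :=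
        add_le_add (mul_le_mul_of_nonneg_right hb1 hS0)
          (mul_le_mul_of_nonneg_right hb2 hT0)
    _ = b * (S + T) := by ring
end

section
/- Let μ > 0 and let φ : ℝ → ℝ be concave on the interval [0, μ) and differentiable at every point of (0, μ). Let a > 0, b > 0, and let reals r, r⁺, s, d₀, d₁, d₂ satisfy: 0 ≤ r⁺ ≤ r < μ, r > 0, d₀ ≥ 0, d₁ ≥ 0, d₂ ≥ 0, the descent bound r − r⁺ ≥ a·d₀², the subgradient bound 0 < s ≤ b(d₁ + d₂), and the Kurdyka–Łojasiewicz inequality φ'(r)·s ≥ 1. Then d₀² ≤ (b/a)·(φ(r) − φ(r⁺))·(d₁ + d₂). -/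
/-- The key Kurdyka–Łojasiewicz chain inequality in the proof of Theorem 1 of TECU. -/
theorem tecu_kl_chain_inequality
    (μ : ℝ) (hμ : 0 < μ) (φ : ℝ → ℝ)
    (hconc : ConcaveOn ℝ (Set.Ico (0 : ℝ) μ) φ)
    (hdiff : ∀ x ∈ Set.Ioo (0 : ℝ) μ, DifferentiableAt ℝ φ x)
    (a b : ℝ) (ha : 0 < a) (hb : 0 < b)
    (r rp s d₀ d₁ d₂ : ℝ)
    (hrp : 0 ≤ rp) (hrpr : rp ≤ r) (hrμ : r < μ) (hr : 0 < r)
    (hd₀ : 0 ≤ d₀) (hd₁ : 0 ≤ d₁) (hd₂ : 0 ≤ d₂)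
    (hdesc : r - rp ≥ a * d₀ ^ 2)
    (hs : 0 < s) (hsb : s ≤ b * (d₁ + d₂))
    (hkl : deriv φ r * s ≥ 1) :
    d₀ ^ 2 ≤ (b / a) * (φ r - φ rp) * (d₁ + d₂) := by
  have hdpos : 0 < deriv φ r := by
    nlinarith [sq_nonneg (deriv φ r)]
  rcases eq_or_lt_of_le hrpr with heq | hlt
  · have h0 : d₀ ^ 2 ≤ 0 := by nlinarith
    have : d₀ ^ 2 = 0 := le_antisymm h0 (sq_nonneg d₀)
    rw [this, heq]
    simp
  · have hslope := hconc.deriv_le_slope (x := rp) (y := r)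
      ⟨hrp, lt_of_le_of_lt hrpr hrμ⟩ ⟨le_of_lt hr, hrμ⟩ hlt
      (hdiff r ⟨hr, hrμ⟩)
    rw [slope_def_field] at hslope
    have hdiffpos : 0 < r - rp := sub_pos.mpr hlt
    -- φ r - φ rp ≥ deriv φ r * (r - rp)
    have key : deriv φ r * (r - rp) ≤ φ r - φ rp := by
      have := mul_le_mul_of_nonneg_right hslope (le_of_lt hdiffpos)
      rw [div_mul_cancel₀] at this
      · linarith
      · exact ne_of_gt hdiffpos
    -- φ r - φ rp ≥ (r - rp)/s ≥ a d₀² / s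
    have hφpos : 0 ≤ φ r - φ rp := le_trans (by positivity) key
    have h1 : a * d₀ ^ 2 ≤ (φ r - φ rp) * s := by
      nlinarith
    have h2 : (φ r - φ rp) * s ≤ (φ r - φ rp) * (b * (d₁ + d₂)) :=
      mul_le_mul_of_nonneg_left hsb hφpos
    rw [div_mul_eq_mul_div, div_mul_eq_mul_div, le_div_iff₀ ha]
    nlinarith
end

section
/- Let d : ℕ → ℝ be a nonnegative sequence, φ : ℕ → ℝ a nonnegative nonincreasing sequence, μ ≥ 0 a real constant, and T ∈ ℕ. Suppose that for all t > T the inequality d(t+1)² ≤ μ·(φ(t) − φ(t+1))·(d(t) + d(t−1)) holds. Then the sequence d is summable: ∑_{t=0}^∞ d(t) < ∞. -/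
/-- Finite-length argument in the proof of Theorem 1 of TECU:
the recursive gap inequality implies summability of the gaps. -/
theorem tecu_gaps_summable
    (d : ℕ → ℝ) (hd : ∀ t, 0 ≤ d t)
    (φ : ℕ → ℝ) (hφ : ∀ t, 0 ≤ φ t) (hmono : Antitone φ)
    (μ : ℝ) (hμ : 0 ≤ μ) (T : ℕ)
    (hrec : ∀ t : ℕ, T < t → d (t + 1) ^ 2 ≤ μ * (φ t - φ (t + 1)) * (d t + d (t - 1))) :
    Summable d := by
  set f : ℕ → ℝ := fun n => ∑ t ∈ Finset.range n, d t with hf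
  have fstep : ∀ n, f (n + 1) = f n + d n := by
    intro n; simp [hf, Finset.sum_range_succ]
  have fmono : Monotone f := fun a b hab =>
    Finset.sum_le_sum_of_subset_of_nonneg (Finset.range_subset_range.2 hab)
      (fun i _ _ => hd i)
  -- AM-GM step
  have key : ∀ n, T ≤ n →
      4 * d (n + 2) ≤ d (n + 1) + d n + 4 * μ * (φ (n + 1) - φ (n + 2)) := by
    intro n hn
    have h := hrec (n + 1) (by omega)
    simp only [Nat.add_sub_cancel] at h
    have hX : 0 ≤ μ * (φ (n + 1) - φ (n + 2)) :=
      mul_nonneg hμ (sub_nonneg.2 (hmono (by omega)))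
    have hY : 0 ≤ d (n + 1) + d n := add_nonneg (hd _) (hd _)
    nlinarith [sq_nonneg (d (n + 1) + d n - 4 * (μ * (φ (n + 1) - φ (n + 2)))),
      hd (n + 2), sq_nonneg (d (n + 2))]
  -- Lyapunov function
  set W : ℕ → ℝ := fun n => 4 * f (n + 2) - f (n + 1) - f n + 4 * μ * φ (n + 1) with hW
  have Wstep : ∀ n, T ≤ n → W (n + 1) ≤ W n := by
    intro n hn
    have h := key n hn
    have e1 := fstep (n + 2)
    have e2 := fstep (n + 1)
    have e3 := fstep n
    simp only [hW]
    have : n + 1 + 2 = n + 2 + 1 := by omega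
    rw [this]
    linarith
  have Wle : ∀ n, T ≤ n → W n ≤ W T := by
    intro n hn
    induction n, hn using Nat.le_induction with
    | base => exact le_rfl
    | succ m hm ih => exact le_trans (Wstep m hm) ih
  have Wbig : ∀ n, 2 * f (n + 2) ≤ W n := by
    intro n
    have h1 : f (n + 1) ≤ f (n + 2) := fmono (by omega)
    have h2 : f n ≤ f (n + 2) := fmono (by omega)
    have h3 : 0 ≤ μ * φ (n + 1) := mul_nonneg hμ (hφ _)
    simp only [hW]; linarith
  clear_value W
  have bound : ∀ n, f n ≤ W T / 2 := by
    intro n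
    have h1 : f n ≤ f (max n T + 2) := fmono (by omega)
    have h2 := Wbig (max n T)
    have h3 := Wle (max n T) (le_max_right _ _)
    linarith
  exact summable_of_sum_range_le hd bound
end
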